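/- Define f : ℝ × ℝ³ → ℂ × ℂ³ = ℂ⁴ by f(x, y) = (1/√2)·(e^{ix}, e^{−ix}·y). Then for every x ∈ ℝ and every y ∈ ℝ³ with ‖y‖ = 1: (i) ‖f(x,y)‖ = 1, so f maps into the unit sphere S⁷ ⊂ ℂ⁴; (ii) ⟨∂f/∂x, i·f⟩_ℝ = 0; and (iii) for every V ∈ ℝ³, the tangent vector (0, (1/√2)·e^{−ix}·V) obtained by varying y satisfies ⟨(0, (1/√2)·e^{−ix}·V), i·f(x,y)⟩_ℝ = 0. Hence f is a Legendrian immersion into S⁷. -/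

import Mathlib

open scoped ComplexInnerProductSpace


/-- f(x,y) = (1/√2)(e^{ix}, e^{−ix}y) is a Legendrian immersion into S⁷ ⊂ ℂ⁴. -/
theorem stmt_17 (f : ℝ → EuclideanSpace ℝ (Fin 3) → EuclideanSpace ℂ (Fin 4))
    (hf : ∀ (x : ℝ) (y : EuclideanSpace ℝ (Fin 3)),
      f x y = (WithLp.equiv 2 (Fin 4 → ℂ)).symm
        ![((1/Real.sqrt 2 : ℝ) : ℂ) * Complex.exp (Complex.I * (x : ℂ)),
          ((1/Real.sqrt 2 : ℝ) : ℂ) * Complex.exp (-Complex.I * (x : ℂ)) * ((y 0 : ℝ) : ℂ),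
          ((1/Real.sqrt 2 : ℝ) : ℂ) * Complex.exp (-Complex.I * (x : ℂ)) * ((y 1 : ℝ) : ℂ),
          ((1/Real.sqrt 2 : ℝ) : ℂ) * Complex.exp (-Complex.I * (x : ℂ)) * ((y 2 : ℝ) : ℂ)]) :
    ∀ (x : ℝ) (y : EuclideanSpace ℝ (Fin 3)), ‖y‖ = 1 →
      ‖f x y‖ = 1 ∧
      (⟪deriv (fun t => f t y) x, Complex.I • f x y⟫).re = 0 ∧
      ∀ V : EuclideanSpace ℝ (Fin 3),
        (⟪((WithLp.equiv 2 (Fin 4 → ℂ)).symm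
            ![(0 : ℂ),
              ((1/Real.sqrt 2 : ℝ) : ℂ) * Complex.exp (-Complex.I * (x : ℂ)) * ((V 0 : ℝ) : ℂ),
              ((1/Real.sqrt 2 : ℝ) : ℂ) * Complex.exp (-Complex.I * (x : ℂ)) * ((V 1 : ℝ) : ℂ),
              ((1/Real.sqrt 2 : ℝ) : ℂ) * Complex.exp (-Complex.I * (x : ℂ)) * ((V 2 : ℝ) : ℂ)]),
          Complex.I • f x y⟫).re = 0 := by
  intro x y hy
  set c : ℝ := 1 / Real.sqrt 2 with hc
  have hc2 : c ^ 2 = 1 / 2 := by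
    rw [hc, div_pow, one_pow, Real.sq_sqrt (by norm_num : (2:ℝ) ≥ 0)]
  have hy2 : y 0 ^ 2 + y 1 ^ 2 + y 2 ^ 2 = 1 := by
    have h := congrArg (· ^ 2) hy
    rw [EuclideanSpace.norm_eq] at h
    simp only [Fin.sum_univ_three, Real.norm_eq_abs, sq_abs] at h
    rw [Real.sq_sqrt (by positivity)] at h
    simpa using h
  -- exp facts
  have hee : Complex.exp (Complex.I * x) * Complex.exp (-Complex.I * x) = 1 := by
    rw [← Complex.exp_add]; ring_nf; exact Complex.exp_zero
  have hconj1 : (starRingEnd ℂ) (Complex.exp (Complex.I * x)) = Complex.exp (-Complex.I * x) := by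
    rw [← Complex.exp_conj]; congr 1; simp [Complex.conj_ofReal]
  have hconj2 : (starRingEnd ℂ) (Complex.exp (-Complex.I * x)) = Complex.exp (Complex.I * x) := by
    rw [← Complex.exp_conj]; congr 1; simp [Complex.conj_ofReal]
  -- derivative
  have hd : HasDerivAt (fun t : ℝ => f t y)
      ((WithLp.equiv 2 (Fin 4 → ℂ)).symm
        ![(c : ℂ) * (Complex.I * Complex.exp (Complex.I * x)),
          (c : ℂ) * (-Complex.I * Complex.exp (-Complex.I * x)) * ((y 0 : ℝ) : ℂ),
          (c : ℂ) * (-Complex.I * Complex.exp (-Complex.I * x)) * ((y 1 : ℝ) : ℂ),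
          (c : ℂ) * (-Complex.I * Complex.exp (-Complex.I * x)) * ((y 2 : ℝ) : ℂ)]) x := by
    have h1 : HasDerivAt (fun t : ℝ => (t : ℂ)) 1 x := by
      simpa using (hasDerivAt_id x).ofReal_comp
    have hE : HasDerivAt (fun t : ℝ => Complex.exp (Complex.I * t))
        (Complex.I * Complex.exp (Complex.I * x)) x := by
      simpa [mul_comm] using (h1.const_mul Complex.I).cexp
    have hE' : HasDerivAt (fun t : ℝ => Complex.exp (-Complex.I * t))
        (-Complex.I * Complex.exp (-Complex.I * x)) x := by
      simpa [mul_comm] using (h1.const_mul (-Complex.I)).cexp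
    have hpi : HasDerivAt (fun t : ℝ =>
        (![(c : ℂ) * Complex.exp (Complex.I * t),
          (c : ℂ) * Complex.exp (-Complex.I * t) * ((y 0 : ℝ) : ℂ),
          (c : ℂ) * Complex.exp (-Complex.I * t) * ((y 1 : ℝ) : ℂ),
          (c : ℂ) * Complex.exp (-Complex.I * t) * ((y 2 : ℝ) : ℂ)] : Fin 4 → ℂ))
        ![(c : ℂ) * (Complex.I * Complex.exp (Complex.I * x)),
          (c : ℂ) * (-Complex.I * Complex.exp (-Complex.I * x)) * ((y 0 : ℝ) : ℂ),
          (c : ℂ) * (-Complex.I * Complex.exp (-Complex.I * x)) * ((y 1 : ℝ) : ℂ),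
          (c : ℂ) * (-Complex.I * Complex.exp (-Complex.I * x)) * ((y 2 : ℝ) : ℂ)] x := by
      rw [hasDerivAt_pi]
      intro i
      fin_cases i
      · simpa using hE.const_mul (c : ℂ)
      · simpa using (hE'.const_mul (c : ℂ)).mul_const ((y 0 : ℝ) : ℂ)
      · simpa using (hE'.const_mul (c : ℂ)).mul_const ((y 1 : ℝ) : ℂ)
      · simpa using (hE'.const_mul (c : ℂ)).mul_const ((y 2 : ℝ) : ℂ)
    have := (((PiLp.continuousLinearEquiv 2 ℝ (fun _ : Fin 4 => ℂ)).symm).toContinuousLinearMap.hasFDerivAt.comp_hasDerivAt x hpi)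
    simp only [hf]
    exact this
  refine ⟨?_, ?_, ?_⟩
  · rw [hf, EuclideanSpace.norm_eq]
    simp only [WithLp.equiv_symm_apply, PiLp.toLp_apply, Fin.sum_univ_four, Matrix.cons_val_zero,
      Matrix.cons_val_one, Matrix.head_cons, Matrix.cons_val_two, Matrix.tail_cons,
      Matrix.cons_val_three]
    rw [show (1:ℝ) = Real.sqrt 1 by simp]
    congr 1
    have hc2' : ((Real.sqrt 2)⁻¹:ℝ)^2 = 1/2 := by
      rw [inv_pow, Real.sq_sqrt (by norm_num : (2:ℝ) ≥ 0)]; norm_num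
    simp [norm_mul, Complex.norm_exp, Complex.mul_re, sq_abs, hc]
    simp only [mul_pow, Complex.norm_real, Real.norm_eq_abs, sq_abs, abs_of_nonneg (Real.sqrt_nonneg 2)]
    linear_combination (1/2)*hy2 + (y 0^2 + y 1^2 + y 2^2)*hc2'
  · rw [hd.deriv, hf]
    simp only [WithLp.equiv_symm_apply, PiLp.toLp_apply, PiLp.inner_apply, RCLike.inner_apply,
      PiLp.smul_apply, smul_eq_mul, Fin.sum_univ_four, Matrix.cons_val_zero,
      Matrix.cons_val_one, Matrix.head_cons, Matrix.cons_val_two, Matrix.tail_cons,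
      Matrix.cons_val_three, map_mul, hconj1, hconj2, map_neg, Complex.conj_I,
      Complex.conj_ofReal]
    have hre : (Complex.exp (-Complex.I * x)).re = (Complex.exp (Complex.I * x)).re := by
      rw [← hconj1]; simp
    have him : (Complex.exp (-Complex.I * x)).im = -(Complex.exp (Complex.I * x)).im := by
      rw [← hconj1]; simp
    have hn := congrArg Complex.re hee
    simp only [Complex.mul_re, hre, him, Complex.one_re] at hn
    have hc2' : ((Real.sqrt 2)⁻¹:ℝ)^2 = 1/2 := by
      rw [inv_pow, Real.sq_sqrt (by norm_num : (2:ℝ) ≥ 0)]; norm_num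
    simp only [Complex.add_re, Complex.mul_re, Complex.mul_im, Complex.I_re, Complex.I_im,
      Complex.ofReal_re, Complex.ofReal_im, Complex.neg_re, Complex.neg_im, hre, him, hc]
    linear_combination
      (((Complex.exp (Complex.I * (x:ℂ))).re^2 + (Complex.exp (Complex.I * (x:ℂ))).im^2) *
        (1 - (y 0^2 + y 1^2 + y 2^2)))*hc2'
      + (1/2*(1 - (y 0^2 + y 1^2 + y 2^2)))*hn - (1/2)*hy2
  · intro V
    rw [hf]
    simp only [WithLp.equiv_symm_apply, PiLp.toLp_apply, PiLp.inner_apply, RCLike.inner_apply,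
      PiLp.smul_apply, smul_eq_mul, Fin.sum_univ_four, Matrix.cons_val_zero,
      Matrix.cons_val_one, Matrix.head_cons, Matrix.cons_val_two, Matrix.tail_cons,
      Matrix.cons_val_three, map_mul, hconj1, hconj2, Complex.conj_ofReal, map_zero]
    have hre : (Complex.exp (-Complex.I * x)).re = (Complex.exp (Complex.I * x)).re := by
      rw [← hconj1]; simp
    have him : (Complex.exp (-Complex.I * x)).im = -(Complex.exp (Complex.I * x)).im := by
      rw [← hconj1]; simp
    simp only [Complex.add_re, Complex.mul_re, Complex.mul_im, Complex.I_re, Complex.I_im,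
      Complex.ofReal_re, Complex.ofReal_im, Complex.neg_re, Complex.neg_im, Complex.zero_re,
      Complex.zero_im, hre, him]
    ring
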